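/- arXiv:1807.00833 — 2 statements merged into one kernel-verified Lean document; each statement's English description precedes it below -/
import Mathlib

section
/- Let G be a group and let H be a normal subgroup of G with H contained in the commutator subgroup [G,G]. Let S ⊆ H be a generating set for H that is contained in finitely many orbits of the conjugation action of G on H. Suppose there is a constant C ≥ 0 such that every element of H can be written as a product of at most C elements of S ∪ S⁻¹. Then there is a constant K ≥ 0 such that every element of H can be written as a product of at most K commutators of elements of G. -/
open scoped commutatorElement
/-- `g` is a product of `n` commutators in `G`. -/
def IsCommProd {G : Type*} [Group G] (n : ℕ) (g : G) : Prop :=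
  ∃ a b : Fin n → G, g = (List.ofFn fun i => ⁅a i, b i⁆).prod

/-- The commutator length of `g`: the smallest `n` such that `g` is a product of
`n` commutators. -/
noncomputable def cl {G : Type*} [Group G] (g : G) : ℕ :=
  sInf {n : ℕ | IsCommProd n g}

/-- `w` is a product of `n` elements of `S ∪ S⁻¹`. -/
def IsWordProd {G : Type*} [Group G] (S : Set G) (n : ℕ) (w : G) : Prop :=
  ∃ f : Fin n → G, (∀ i, f i ∈ S ∪ S⁻¹) ∧ w = (List.ofFn f).prod

/-- The word norm of `w` with respect to the generating set `S`: the smallest `n`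
such that `w` is a product of `n` elements of `S ∪ S⁻¹`. -/
noncomputable def wordNorm {G : Type*} [Group G] (S : Set G) (w : G) : ℕ :=
  sInf {n : ℕ | IsWordProd S n w}

/-- helper: from a list of commutators of length ≤ n, get IsCommProd n -/
lemma isCommProd_of_list {G : Type*} [Group G] {n : ℕ} {g : G} (l : List G)
    (hmem : ∀ x ∈ l, ∃ a b : G, x = ⁅a, b⁆) (hlen : l.length ≤ n) (hg : g = l.prod) :
    IsCommProd n g := by
  classical
  set l' : List G := l ++ List.replicate (n - l.length) 1 with hl'
  have hmem' : ∀ x ∈ l', ∃ a b : G, x = ⁅a, b⁆ := by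
    intro x hx
    rcases List.mem_append.1 hx with h | h
    · exact hmem x h
    · exact ⟨1, 1, by simp [List.eq_of_mem_replicate h]⟩
  have hlen' : l'.length = n := by simp [hl']; omega
  have hprod : l'.prod = g := by simp [hl', hg]
  choose a b hab using hmem'
  refine ⟨fun i => a (l'.get (i.cast hlen'.symm)) (l'.get_mem _),
         fun i => b (l'.get (i.cast hlen'.symm)) (l'.get_mem _), ?_⟩
  rw [← hprod]
  congr 1
  apply List.ext_getElem
  · simp [hlen']
  · intro i h1 h2
    simp only [List.getElem_ofFn]
    exact hab _ _

/-- If `H ⊴ G` lies in `[G,G]`, `S` generates `H` and lies in finitely many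
`G`-conjugacy orbits, and every element of `H` is a product of at most `C` elements of
`S ∪ S⁻¹`, then the commutator length (in `G`) is uniformly bounded on `H`. -/
theorem bounded_cl_of_bounded_wordNorm {G : Type*} [Group G] (H : Subgroup G) [H.Normal]
    (hHcomm : H ≤ commutator G) (S : Set G) (hSH : S ⊆ (H : Set G))
    (hSgen : Subgroup.closure S = H)
    (T : Finset G) (hTS : (T : Set G) ⊆ S)
    (horb : ∀ s ∈ S, ∃ g : G, ∃ t ∈ T, s = g * t * g⁻¹)
    (C : ℕ) (hC : ∀ h ∈ H, ∃ n ≤ C, IsWordProd S n h) :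
    ∃ K : ℕ, ∀ h ∈ H, ∃ n ≤ K, IsCommProd n h := by
  classical
  -- every element of the commutator subgroup is a product of commutators
  have hcomm : ∀ x : G, x ∈ commutator G →
      ∃ l : List G, (∀ y ∈ l, ∃ a b : G, y = ⁅a, b⁆) ∧ x = l.prod := by
    intro x hx
    rw [commutator_eq_closure] at hx
    have hx' : x ∈ Submonoid.closure (commutatorSet G ∪ (commutatorSet G)⁻¹) := by
      have h2 : x ∈ (Subgroup.closure (commutatorSet G)).toSubmonoid := hx
      rwa [Subgroup.closure_toSubmonoid] at h2
    obtain ⟨l, hl, hprod⟩ := Submonoid.exists_list_of_mem_closure hx'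
    refine ⟨l, ?_, hprod.symm⟩
    intro y hy
    rcases hl y hy with h | h
    · obtain ⟨a, b, hab⟩ := h; exact ⟨a, b, hab.symm⟩
    · obtain ⟨a, b, hab⟩ := h
      exact ⟨b, a, by rw [← commutatorElement_inv, hab, inv_inv]⟩
  -- choose a list for each element of T, let M be the max length
  have hTcomm : ∀ t ∈ T, ∃ l : List G, (∀ y ∈ l, ∃ a b : G, y = ⁅a, b⁆) ∧ t = l.prod :=
    fun t ht => hcomm t (hHcomm (hSH (hTS ht)))
  choose! L hLmem hLprod using hTcomm
  set M := T.sup (fun t => (L t).length) with hM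
  -- every element of S ∪ S⁻¹ is a product of ≤ M commutators
  have hS' : ∀ s ∈ S ∪ S⁻¹, ∃ l : List G,
      (∀ y ∈ l, ∃ a b : G, y = ⁅a, b⁆) ∧ l.length ≤ M ∧ s = l.prod := by
    have hSonly : ∀ s ∈ S, ∃ l : List G,
        (∀ y ∈ l, ∃ a b : G, y = ⁅a, b⁆) ∧ l.length ≤ M ∧ s = l.prod := by
      intro s hs
      obtain ⟨g, t, ht, rfl⟩ := horb s hs
      refine ⟨(L t).map (fun x => g * x * g⁻¹), ?_, by simpa using Finset.le_sup (f := fun t => (L t).length) ht, ?_⟩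
      · intro y hy
        obtain ⟨x, hx, rfl⟩ := List.mem_map.1 hy
        obtain ⟨a, b, rfl⟩ := hLmem t ht x hx
        exact ⟨g * a * g⁻¹, g * b * g⁻¹, by group⟩
      · have h2 : (L t).map (fun x => g * x * g⁻¹) = (L t).map (MulAut.conj g) := by
          simp [MulAut.conj_apply]
        rw [h2, ← map_list_prod (MulAut.conj g), ← hLprod t ht, MulAut.conj_apply]
    intro s hs
    rcases hs with hs | hs
    · exact hSonly s hs
    · obtain ⟨l, hl, hlen, hprod⟩ := hSonly s⁻¹ hs
      refine ⟨(l.map (·⁻¹)).reverse, ?_, by simpa using hlen, ?_⟩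
      · intro y hy
        rw [List.mem_reverse] at hy
        obtain ⟨x, hx, rfl⟩ := List.mem_map.1 hy
        obtain ⟨a, b, rfl⟩ := hl x hx
        exact ⟨b, a, (commutatorElement_inv a b)⟩
      · rw [← List.prod_inv_reverse, ← hprod, inv_inv]
  -- conclude
  refine ⟨C * M, fun h hh => ?_⟩
  obtain ⟨n, hn, f, hf, hprod⟩ := hC h hh
  choose l hlmem hllen hlprod using fun i => hS' (f i) (hf i)
  refine ⟨C * M, le_refl _, isCommProd_of_list ((List.ofFn l).flatten) ?_ ?_ ?_⟩
  · intro y hy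
    rw [List.mem_flatten] at hy
    obtain ⟨li, hli, hy⟩ := hy
    rw [List.mem_ofFn] at hli
    obtain ⟨i, rfl⟩ := hli
    exact hlmem i y hy
  · rw [List.length_flatten]
    calc ((List.ofFn l).map List.length).sum
        ≤ ((List.ofFn l).map List.length).length * M := by
          apply List.sum_le_card_nsmul
          intro x hx
          rw [List.mem_map] at hx
          obtain ⟨li, hli, rfl⟩ := hx
          rw [List.mem_ofFn] at hli
          obtain ⟨i, rfl⟩ := hli
          exact hllen i
      _ ≤ C * M := by simp; exact Nat.mul_le_mul_right M hn
  · rw [List.prod_flatten, List.map_ofFn, hprod]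
    exact congrArg List.prod (congrArg List.ofFn (funext fun i => hlprod i))
end

section
/- Let G be a group and let H be a normal subgroup of G with H contained in the commutator subgroup [G,G]. Let S ⊆ H be a generating set for H that is contained in finitely many orbits of the conjugation action of G on H. Suppose there is a constant C ≥ 0 such that every element of H can be written as a product of at most C elements of S ∪ S⁻¹ (i.e., the Cayley graph of H with respect to S has finite diameter). Then for every h ∈ H, the stable commutator length of h in G is zero; that is, the sequence cl(hⁿ)/n tends to 0 as n → ∞, where cl denotes commutator length in G. -/
open scoped commutatorElement
section aux
variable {G : Type*} [Group G]

lemma isCommProd_iff_list (n : ℕ) (g : G) :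
    IsCommProd n g ↔ ∃ l : List G, l.length = n ∧ (∀ x ∈ l, x ∈ commutatorSet G) ∧ g = l.prod := by
  constructor
  · rintro ⟨a, b, rfl⟩
    refine ⟨_, by simp, ?_, rfl⟩
    intro x hx
    rw [List.mem_ofFn] at hx
    obtain ⟨i, rfl⟩ := hx
    exact ⟨a i, b i, rfl⟩
  · rintro ⟨l, rfl, hmem, rfl⟩
    choose a b hab using fun i : Fin l.length => hmem l[i] (l.getElem_mem i.2)
    exact ⟨a, b, by simp [hab, List.ofFn_getElem]⟩
end aux

section aux2
variable {G : Type*} [Group G]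

lemma IsCommProd.mul {m n : ℕ} {x y : G} (hx : IsCommProd m x) (hy : IsCommProd n y) :
    IsCommProd (m + n) (x * y) := by
  rw [isCommProd_iff_list] at *
  obtain ⟨l₁, h₁, hm₁, rfl⟩ := hx
  obtain ⟨l₂, h₂, hm₂, rfl⟩ := hy
  exact ⟨l₁ ++ l₂, by simp [h₁, h₂], by
    intro x hx; rcases List.mem_append.1 hx with h | h
    exacts [hm₁ x h, hm₂ x h], (List.prod_append).symm⟩

lemma isCommProd_one (n : ℕ) : IsCommProd n (1 : G) := by
  rw [isCommProd_iff_list]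
  refine ⟨List.replicate n 1, by simp, ?_, by simp⟩
  intro x hx
  rw [List.eq_of_mem_replicate hx]
  exact ⟨1, 1, by simp⟩

lemma IsCommProd.mono {m n : ℕ} {x : G} (hx : IsCommProd m x) (h : m ≤ n) :
    IsCommProd n x := by
  have := hx.mul (isCommProd_one (n - m) (G := G))
  rwa [mul_one, Nat.add_sub_cancel' h] at this

lemma IsCommProd.conj {n : ℕ} {x : G} (hx : IsCommProd n x) (c : G) :
    IsCommProd n (c * x * c⁻¹) := by
  rw [isCommProd_iff_list] at *
  obtain ⟨l, hl, hm, rfl⟩ := hx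
  refine ⟨l.map (MulAut.conj c), by simp [hl], ?_, ?_⟩
  · intro x hx
    rw [List.mem_map] at hx
    obtain ⟨y, hy, rfl⟩ := hx
    obtain ⟨a, b, rfl⟩ := hm y hy
    exact ⟨MulAut.conj c a, MulAut.conj c b, (map_commutatorElement _ _ _).symm⟩
  · have : (List.map (⇑(MulAut.conj c)) l).prod = (MulAut.conj c : G →* G) l.prod := by
      rw [map_list_prod]; rfl
    rw [this]; simp [MulAut.conj_apply]

lemma IsCommProd.inv {n : ℕ} {x : G} (hx : IsCommProd n x) : IsCommProd n x⁻¹ := by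
  rw [isCommProd_iff_list] at *
  obtain ⟨l, hl, hm, rfl⟩ := hx
  refine ⟨(l.map (·⁻¹)).reverse, by simp [hl], ?_, List.prod_inv_reverse l⟩
  intro x hx
  rw [List.mem_reverse, List.mem_map] at hx
  obtain ⟨y, hy, rfl⟩ := hx
  obtain ⟨a, b, rfl⟩ := hm y hy
  exact ⟨b, a, (commutatorElement_inv a b).symm⟩

lemma exists_isCommProd {g : G} (hg : g ∈ commutator G) : ∃ n, IsCommProd n g := by
  rw [commutator_eq_closure] at hg
  have hg' : g ∈ Submonoid.closure (commutatorSet G ∪ (commutatorSet G)⁻¹) := by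
    rw [← Subgroup.closure_toSubmonoid]; exact hg
  obtain ⟨l, hl, rfl⟩ := Submonoid.exists_list_of_mem_closure hg'
  refine ⟨l.length, (isCommProd_iff_list _ _).2 ⟨l, rfl, ?_, rfl⟩⟩
  intro x hx
  rcases hl x hx with h | h
  · exact h
  · obtain ⟨a, b, hab⟩ := h
    exact ⟨b, a, by rw [← commutatorElement_inv, hab, inv_inv]⟩

lemma cl_le {n : ℕ} {g : G} (h : IsCommProd n g) : cl g ≤ n := Nat.sInf_le h

lemma isCommProd_cl {g : G} (hg : g ∈ commutator G) : IsCommProd (cl g) g := by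
  obtain ⟨n, hn⟩ := exists_isCommProd hg
  exact Nat.sInf_mem (⟨n, hn⟩ : Set.Nonempty {n | IsCommProd n g})

end aux2

lemma isCommProd_list_prod {G : Type*} [Group G] {M : ℕ} (l : List G)
    (h : ∀ x ∈ l, IsCommProd M x) : IsCommProd (l.length * M) l.prod := by
  induction l with
  | nil => simpa using isCommProd_one 0
  | cons a l ih =>
    have := (h a List.mem_cons_self).mul (ih fun x hx => h x (List.mem_cons_of_mem a hx))
    simpa [List.length_cons, add_mul, one_mul, add_comm] using this


/-- If `H ⬴ G` lies in `[G,G]`, `S` generates `H` and lies in finitely many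
`G`-conjugacy orbits, and every element of `H` is a product of at most `C` elements of
`S ∪ S⁻¹`, then every element of `H` has stable commutator length zero in `G`. -/
theorem scl_eq_zero_of_bounded_wordNorm {G : Type*} [Group G] (H : Subgroup G) [H.Normal]
    (hHcomm : H ≤ commutator G) (S : Set G) (hSH : S ⊆ (H : Set G))
    (hSgen : Subgroup.closure S = H)
    (T : Finset G) (hTS : (T : Set G) ⊆ S)
    (horb : ∀ s ∈ S, ∃ g : G, ∃ t ∈ T, s = g * t * g⁻¹)
    (C : ℕ) (hC : ∀ h ∈ H, ∃ n ≤ C, IsWordProd S n h) :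
    ∀ h ∈ H, Filter.Tendsto (fun n : ℕ => (cl (h ^ n) : ℝ) / n)
      Filter.atTop (nhds 0) := by
  intro h hh
  set M : ℕ := T.sup cl with hM
  -- every element of S ∪ S⁻¹ is a product of M commutators
  have hS' : ∀ s ∈ S ∪ S⁻¹, IsCommProd M s := by
    have hS : ∀ s ∈ S, IsCommProd M s := by
      intro s hs
      obtain ⟨g, t, htT, rfl⟩ := horb s hs
      have htc : t ∈ commutator G := hHcomm (hSH (hTS htT))
      exact ((isCommProd_cl htc).mono (Finset.le_sup htT)).conj g
    rintro s (hs | hs)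
    · exact hS s hs
    · simpa using (hS s⁻¹ hs).inv
  -- uniform bound on cl (h ^ n)
  have key : ∀ n : ℕ, cl (h ^ n) ≤ C * M := by
    intro n
    obtain ⟨k, hkC, f, hf, hprod⟩ := hC (h ^ n) (pow_mem hh n)
    have : IsCommProd (k * M) (h ^ n) := by
      rw [hprod]
      have := isCommProd_list_prod (List.ofFn f) (by
        intro x hx
        rw [List.mem_ofFn] at hx
        obtain ⟨i, rfl⟩ := hx
        exact hS' _ (hf i))
      simpa using this
    exact cl_le (this.mono (Nat.mul_le_mul_right M hkC))
  refine squeeze_zero (g := fun n : ℕ => ((C * M : ℕ) : ℝ) / n) (fun n => by positivity)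
    (fun n => ?_) (tendsto_const_div_atTop_nhds_zero_nat _)
  exact div_le_div_of_nonneg_right (by exact_mod_cast key n) (Nat.cast_nonneg n)
end
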